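/- Let f : [0,1] → [0,1] be a continuous transitive map. Then either (1) f is topologically mixing, or (2) there exists a fixed point a ∈ (0,1) such that f([0,a]) = [a,1], f([a,1]) = [0,a], and both f^2 restricted to [0,a] and f^2 restricted to [a,1] are topologically mixing. In either case the periodic points of f are dense in [0,1]. -/

import Mathlib

open Set Function

/-- Topological transitivity of `g` on the set `S` (relative topology). -/
def TransitiveOnS (g : ℝ → ℝ) (S : Set ℝ) : Prop :=
  ∀ U V : Set ℝ, IsOpen U → IsOpen V → (U ∩ S).Nonempty → (V ∩ S).Nonempty →
    ∃ n : ℕ, (g^[n] '' (U ∩ S) ∩ V).Nonempty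

/-- Topological mixing of `g` on the set `S` (relative topology). -/
def MixingOnS (g : ℝ → ℝ) (S : Set ℝ) : Prop :=
  ∀ U V : Set ℝ, IsOpen U → IsOpen V → (U ∩ S).Nonempty → (V ∩ S).Nonempty →
    ∃ N : ℕ, ∀ n ≥ N, (g^[n] '' (U ∩ S) ∩ V).Nonempty

namespace IntDyn

/-- swap structure at a point c -/
def SwapAt (g : ℝ → ℝ) (u v c : ℝ) : Prop :=
  c ∈ Ioo u v ∧ g '' (Icc u c) ⊆ Icc c v ∧ g '' (Icc c v) ⊆ Icc u c

variable {g : ℝ → ℝ} {u v : ℝ}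

lemma iterMaps (hm : MapsTo g (Icc u v) (Icc u v)) (n : ℕ) :
    MapsTo (g^[n]) (Icc u v) (Icc u v) := hm.iterate n

lemma iterCont (hc : ContinuousOn g (Icc u v)) (hm : MapsTo g (Icc u v) (Icc u v)) (n : ℕ) :
    ContinuousOn (g^[n]) (Icc u v) := by
  induction n with
  | zero => exact continuousOn_id
  | succ k ih => rw [Function.iterate_succ']; exact hc.comp ih (hm.iterate k)

lemma ptTrans (ht : TransitiveOnS g (Icc u v)) {U V : Set ℝ} (hU : IsOpen U) (hV : IsOpen V)
    (hUI : (U ∩ Icc u v).Nonempty) (hVI : (V ∩ Icc u v).Nonempty) :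
    ∃ n : ℕ, ∃ x ∈ U ∩ Icc u v, g^[n] x ∈ V := by
  obtain ⟨n, y, hy1, hy2⟩ := ht U V hU hV hUI hVI
  obtain ⟨x, hx, rfl⟩ := hy1
  exact ⟨n, x, hx, hy2⟩

lemma imgSub (hm : MapsTo g (Icc u v) (Icc u v)) {A : Set ℝ} (hA : A ⊆ Icc u v) (n : ℕ) :
    g^[n] '' A ⊆ Icc u v := by
  intro y hy
  obtain ⟨x, hx, rfl⟩ := hy
  exact iterMaps hm n (hA hx)

lemma imgAdd {A : Set ℝ} (m n : ℕ) : g^[m+n] '' A = g^[m] '' (g^[n] '' A) := by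
  rw [Function.iterate_add, Set.image_comp]

lemma imgMono {A B : Set ℝ} (h : A ⊆ B) (n : ℕ) : g^[n] '' A ⊆ g^[n] '' B :=
  Set.image_mono h

lemma fixMemImg {A : Set ℝ} {c : ℝ} (hc : g c = c) (hcA : c ∈ A) (n : ℕ) :
    c ∈ g^[n] '' A := ⟨c, hcA, Function.iterate_fixed hc n⟩

/-- images of compact subintervals are ord-connected -/
lemma imgOrd (hc : ContinuousOn g (Icc u v)) (hm : MapsTo g (Icc u v) (Icc u v))
    {a b : ℝ} (hab : a ≤ b) (hA : Icc a b ⊆ Icc u v) (n : ℕ) :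
    (g^[n] '' Icc a b).OrdConnected := by
  have hpre : IsPreconnected (g^[n] '' Icc a b) :=
    isPreconnected_Icc.image _ ((iterCont hc hm n).mono hA)
  exact hpre.ordConnected

lemma memImgBetween (hc : ContinuousOn g (Icc u v)) (hm : MapsTo g (Icc u v) (Icc u v))
    {a b : ℝ} (hab : a ≤ b) (hA : Icc a b ⊆ Icc u v) (n : ℕ) {z₁ z₂ w : ℝ}
    (h1 : z₁ ∈ g^[n] '' Icc a b) (h2 : z₂ ∈ g^[n] '' Icc a b) (hw1 : z₁ ≤ w) (hw2 : w ≤ z₂) :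
    w ∈ g^[n] '' Icc a b :=
  (imgOrd hc hm hab hA n).out h1 h2 ⟨hw1, hw2⟩


/-- dip lemma : from a nonempty open subinterval of [u,v], some iterate image meets any
open target meeting [u,v]. -/
lemma dip (ht : TransitiveOnS g (Icc u v)) {α β : ℝ} (hαβ : α < β)
    (hsub : Ioo α β ⊆ Icc u v) {T : Set ℝ} (hT : IsOpen T) (hTI : (T ∩ Icc u v).Nonempty) :
    ∃ s : ℕ, ∃ z ∈ Ioo α β, g^[s] z ∈ T := by
  obtain ⟨n, x, hx, hgx⟩ := ptTrans ht isOpen_Ioo hT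
    (by
      obtain ⟨w, hw⟩ := nonempty_Ioo.2 hαβ
      exact ⟨w, hw, hsub hw⟩) hTI
  exact ⟨n, x, hx.1, hgx⟩


/-- a transitive map cannot be constant on [u,v] -/
lemma constNot (huv : u < v) (ht : TransitiveOnS g (Icc u v)) {w : ℝ}
    (hw : w ∈ Icc u v) (hconst : ∀ x ∈ Icc u v, g x = w) : False := by
  set m := (u + v) / 2 with hm
  have hum : u < m := by simp [hm]; linarith
  have hmv : m < v := by simp [hm]; linarith
  have hgw : g w = w := hconst w hw
  have key : ∀ V₀ : Set ℝ, IsOpen V₀ → (V₀ ∩ Icc u v).Nonempty → w ∉ V₀ →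
      ∀ U₀ : Set ℝ, IsOpen U₀ → (U₀ ∩ Icc u v).Nonempty → (U₀ ∩ V₀) = ∅ → False := by
    intro V₀ hV₀ hV₀I hwV U₀ hU₀ hU₀I hdis
    obtain ⟨n, x, hx, hgx⟩ := ptTrans ht hU₀ hV₀ hU₀I hV₀I
    cases n with
    | zero =>
      simp only [Function.iterate_zero, id] at hgx
      have hx0 : x ∈ U₀ ∩ V₀ := ⟨hx.1, hgx⟩
      rw [hdis] at hx0
      exact absurd hx0 (Set.notMem_empty x)
    | succ k =>
      rw [Function.iterate_succ, Function.comp_apply, hconst x hx.2,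
        Function.iterate_fixed hgw k] at hgx
      exact hwV hgx
  have h1 : (Ioo u m ∩ Icc u v).Nonempty := by
    obtain ⟨z, hz⟩ := nonempty_Ioo.2 hum
    exact ⟨z, hz, le_of_lt hz.1, le_trans (le_of_lt hz.2) (le_of_lt hmv)⟩
  have h2 : (Ioo m v ∩ Icc u v).Nonempty := by
    obtain ⟨z, hz⟩ := nonempty_Ioo.2 hmv
    exact ⟨z, hz, le_trans (le_of_lt hum) (le_of_lt hz.1), le_of_lt hz.2⟩
  have hdis1 : Ioo u m ∩ Ioo m v = ∅ := by
    apply Set.eq_empty_iff_forall_notMem.mpr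
    rintro z ⟨⟨_, h1⟩, h2, _⟩
    exact absurd (lt_trans h2 h1) (lt_irrefl m)
  by_cases hwm : w ∈ Ioo u m
  · exact key (Ioo m v) isOpen_Ioo h2 (fun hw' => absurd hwm.2 (not_lt.2 (le_of_lt hw'.1)))
      (Ioo u m) isOpen_Ioo h1 hdis1
  · exact key (Ioo u m) isOpen_Ioo h1 hwm
      (Ioo m v) isOpen_Ioo h2 (by rw [Set.inter_comm]; exact hdis1)

/-- surjectivity -/
lemma surj (huv : u < v) (hc : ContinuousOn g (Icc u v)) (hm : MapsTo g (Icc u v) (Icc u v))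
    (ht : TransitiveOnS g (Icc u v)) : Icc u v ⊆ g '' Icc u v := by
  have hKcpt : IsCompact (g '' Icc u v) := isCompact_Icc.image_of_continuousOn hc
  have hKne : (g '' Icc u v).Nonempty := ⟨g u, u, ⟨le_refl u, le_of_lt huv⟩, rfl⟩
  have hKsub : g '' Icc u v ⊆ Icc u v := by
    rintro y ⟨x, hx, rfl⟩; exact hm hx
  -- v ∈ image
  have hv : v ∈ g '' Icc u v := by
    by_contra hvK
    set B := sSup (g '' Icc u v) with hB
    have hBK : B ∈ g '' Icc u v := hKcpt.sSup_mem hKne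
    have hBle : ∀ y ∈ g '' Icc u v, y ≤ B := fun y hy => le_csSup hKcpt.bddAbove hy
    have hBv : B < v := lt_of_le_of_ne (hKsub hBK).2 (fun h => hvK (h ▸ hBK))
    by_cases hBu : B ≤ u
    · refine constNot huv ht (⟨le_refl u, le_of_lt huv⟩ : u ∈ Icc u v) ?_
      intro x hx
      have h1 : g x ≤ u := le_trans (hBle _ ⟨x, hx, rfl⟩) hBu
      exact le_antisymm h1 (hm hx).1
    · push_neg at hBu
      obtain ⟨n, x, hx, hgx⟩ := ptTrans ht (isOpen_Iio (a := B)) (isOpen_Ioi (a := B))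
        ⟨u, hBu, le_refl u, le_of_lt huv⟩ ⟨v, hBv, le_of_lt huv, le_refl v⟩
      cases n with
      | zero =>
        simp only [Function.iterate_zero, id] at hgx
        exact absurd (lt_trans (Set.mem_Ioi.mp hgx) (Set.mem_Iio.mp hx.1)) (lt_irrefl B)
      | succ k =>
        rw [Function.iterate_succ', Function.comp_apply] at hgx
        have hle : g (g^[k] x) ≤ B := hBle _ ⟨g^[k] x, iterMaps hm k hx.2, rfl⟩
        exact absurd (Set.mem_Ioi.mp hgx) (not_lt.2 hle)
  -- u ∈ image
  have hu : u ∈ g '' Icc u v := by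
    by_contra huK
    set A := sInf (g '' Icc u v) with hA
    have hAK : A ∈ g '' Icc u v := hKcpt.sInf_mem hKne
    have hAle : ∀ y ∈ g '' Icc u v, A ≤ y := fun y hy => csInf_le hKcpt.bddBelow hy
    have hAu : u < A := lt_of_le_of_ne (hKsub hAK).1 (fun h => huK (h ▸ hAK))
    by_cases hAv : v ≤ A
    · refine constNot huv ht (⟨le_of_lt huv, le_refl v⟩ : v ∈ Icc u v) ?_
      intro x hx
      have h1 : v ≤ g x := le_trans hAv (hAle _ ⟨x, hx, rfl⟩)
      exact le_antisymm (hm hx).2 h1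
    · push_neg at hAv
      obtain ⟨n, x, hx, hgx⟩ := ptTrans ht (isOpen_Ioi (a := A)) (isOpen_Iio (a := A))
        ⟨v, hAv, le_of_lt huv, le_refl v⟩ ⟨u, hAu, le_refl u, le_of_lt huv⟩
      cases n with
      | zero =>
        simp only [Function.iterate_zero, id] at hgx
        exact absurd (lt_trans (Set.mem_Ioi.mp hx.1) (Set.mem_Iio.mp hgx)) (lt_irrefl A)
      | succ k =>
        rw [Function.iterate_succ', Function.comp_apply] at hgx
        have hle : A ≤ g (g^[k] x) := hAle _ ⟨g^[k] x, iterMaps hm k hx.2, rfl⟩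
        exact absurd (Set.mem_Iio.mp hgx) (not_lt.2 hle)
  intro y hy
  have hpre : IsPreconnected (g '' Icc u v) := isPreconnected_Icc.image _ hc
  exact hpre.ordConnected.out hu hv ⟨hy.1, hy.2⟩


/-- dense periodic points -/
lemma perdense (hc : ContinuousOn g (Icc u v)) (hm : MapsTo g (Icc u v) (Icc u v))
    (ht : TransitiveOnS g (Icc u v)) {a b : ℝ} (hua : u ≤ a) (hbv : b ≤ v) (hab : a < b) :
    ∃ x ∈ Ioo a b, ∃ n : ℕ, 0 < n ∧ g^[n] x = x := by
  by_contra hno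
  push_neg at hno
  have hsubI : Ioo a b ⊆ Icc u v := fun x hx =>
    ⟨le_trans hua (le_of_lt hx.1), le_trans (le_of_lt hx.2) hbv⟩
  have sign : ∀ n : ℕ, 0 < n →
      (∀ x ∈ Ioo a b, x < g^[n] x) ∨ (∀ x ∈ Ioo a b, g^[n] x < x) := by
    intro n hn
    by_contra hcon
    push_neg at hcon
    obtain ⟨⟨x₁, hx₁, h₁⟩, x₂, hx₂, h₂⟩ := hcon
    have h₁' : g^[n] x₁ < x₁ :=
      lt_of_le_of_ne h₁ (fun h => hno x₁ hx₁ n hn h)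
    have h₂' : x₂ < g^[n] x₂ :=
      lt_of_le_of_ne h₂ (fun h => hno x₂ hx₂ n hn h.symm)
    have hsubU : uIcc x₁ x₂ ⊆ Ioo a b := Set.ordConnected_Ioo.uIcc_subset hx₁ hx₂
    have hφ : ContinuousOn (fun x => g^[n] x - x) (uIcc x₁ x₂) :=
      ((iterCont hc hm n).sub continuousOn_id).mono (hsubU.trans hsubI)
    have hIVT := intermediate_value_uIcc hφ
    have h0 : (0:ℝ) ∈ uIcc (g^[n] x₁ - x₁) (g^[n] x₂ - x₂) := by
      rw [Set.mem_uIcc]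
      left
      constructor <;> [linarith; linarith]
    obtain ⟨z, hz, hz0⟩ := hIVT h0
    have hzfix : g^[n] z = z := by
      have : g^[n] z - z = 0 := hz0
      linarith
    exact hno z (hsubU hz) n hn hzfix
  set m₁ := a + (b-a)/3 with hm₁def
  set m₂ := b - (b-a)/3 with hm₂def
  have h1 : a < m₁ := by rw [hm₁def]; linarith
  have h2 : m₁ < m₂ := by rw [hm₁def, hm₂def]; linarith
  have h3 : m₂ < b := by rw [hm₂def]; linarith
  have hUne : (Ioo a m₁ ∩ Icc u v).Nonempty := by
    refine ⟨(a+m₁)/2, ⟨by linarith, by linarith⟩, hsubI ⟨by linarith, by linarith⟩⟩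
  have hVne : (Ioo m₂ b ∩ Icc u v).Nonempty := by
    refine ⟨(m₂+b)/2, ⟨by linarith, by linarith⟩, hsubI ⟨by linarith, by linarith⟩⟩
  obtain ⟨d, x, hxU, hgx⟩ := ptTrans ht isOpen_Ioo isOpen_Ioo hUne hVne
  have hxab : x ∈ Ioo a b := ⟨hxU.1.1, lt_trans hxU.1.2 (lt_trans h2 h3)⟩
  have hgxab : g^[d] x ∈ Ioo a b := ⟨lt_trans (lt_trans h1 h2) hgx.1, hgx.2⟩
  have hd : 0 < d := by
    rcases Nat.eq_zero_or_pos d with h0 | h0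
    · subst h0
      simp only [Function.iterate_zero, id] at hgx
      exact absurd (lt_trans (lt_trans hxU.1.2 h2) hgx.1) (lt_irrefl x)
    · exact h0
  have hxlt : x < g^[d] x := lt_trans hxU.1.2 (lt_trans h2 hgx.1)
  have sgnup : ∀ z ∈ Ioo a b, z < g^[d] z := by
    rcases sign d hd with h | h
    · exact h
    · exact absurd (h x hxab) (not_lt.2 (le_of_lt hxlt))
  obtain ⟨e, y, hyU, hgy⟩ := ptTrans ht isOpen_Ioo isOpen_Ioo hVne hUne
  have hyab : y ∈ Ioo a b := ⟨lt_trans (lt_trans h1 h2) hyU.1.1, hyU.1.2⟩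
  have hgyab : g^[e] y ∈ Ioo a b := ⟨hgy.1, lt_trans hgy.2 (lt_trans h2 h3)⟩
  have he : 0 < e := by
    rcases Nat.eq_zero_or_pos e with h0 | h0
    · subst h0
      simp only [Function.iterate_zero, id] at hgy
      exact absurd (lt_trans (lt_trans hgy.2 h2) hyU.1.1) (lt_irrefl y)
    · exact h0
  have hylt : g^[e] y < y := lt_trans (lt_trans hgy.2 h2) hyU.1.1
  have sgndn : ∀ z ∈ Ioo a b, g^[e] z < z := by
    rcases sign e he with h | h
    · exact absurd (h y hyab) (not_lt.2 (le_of_lt hylt))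
    · exact h
  have Cup : ∀ j : ℕ, 0 < j → ∀ z ∈ Ioo a b, z < g^[j*d] z := by
    intro j
    induction j with
    | zero => intro h; exact absurd h (lt_irrefl 0)
    | succ k ih =>
      intro _
      rcases Nat.eq_zero_or_pos k with hk | hk
      · subst hk; simpa [one_mul] using sgnup
      · have hx' : x < g^[(k+1)*d] x := by
          have e1 : (k+1)*d = k*d + d := by ring
          rw [e1, Function.iterate_add_apply]
          exact lt_trans hxlt (ih hk _ hgxab)
        rcases sign ((k+1)*d) (Nat.mul_pos (Nat.succ_pos k) hd) with h | h
        · exact h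
        · exact absurd (h x hxab) (not_lt.2 (le_of_lt hx'))
  have Cdn : ∀ j : ℕ, 0 < j → ∀ z ∈ Ioo a b, g^[j*e] z < z := by
    intro j
    induction j with
    | zero => intro h; exact absurd h (lt_irrefl 0)
    | succ k ih =>
      intro _
      rcases Nat.eq_zero_or_pos k with hk | hk
      · subst hk; simpa [one_mul] using sgndn
      · have hy' : g^[(k+1)*e] y < y := by
          have e1 : (k+1)*e = k*e + e := by ring
          rw [e1, Function.iterate_add_apply]
          exact lt_trans (ih hk _ hgyab) hylt
        rcases sign ((k+1)*e) (Nat.mul_pos (Nat.succ_pos k) he) with h | h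
        · exact absurd (h y hyab) (not_lt.2 (le_of_lt hy'))
        · exact h
  have hup := Cup e he x hxab
  have hdn := Cdn d hd x hxab
  rw [show d*e = e*d from mul_comm d e] at hdn
  exact absurd hup (not_lt.2 (le_of_lt hdn))

/-- images of nondegenerate intervals are nondegenerate -/
lemma ncImg (hc : ContinuousOn g (Icc u v)) (hm : MapsTo g (Icc u v) (Icc u v))
    (ht : TransitiveOnS g (Icc u v)) {a b : ℝ} (hua : u ≤ a) (hbv : b ≤ v) (hab : a < b)
    (n : ℕ) : ∃ z₁ ∈ g^[n] '' Icc a b, ∃ z₂ ∈ g^[n] '' Icc a b, z₁ < z₂ := by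
  set m := (a + b) / 2 with hmdef
  have ham : a < m := by rw [hmdef]; linarith
  have hmb : m < b := by rw [hmdef]; linarith
  obtain ⟨p₁, hp₁, k₁, hk₁, hp₁fix⟩ := perdense hc hm ht hua (le_trans (le_of_lt hmb) hbv) ham
  obtain ⟨p₂, hp₂, k₂, hk₂, hp₂fix⟩ := perdense hc hm ht (le_trans hua (le_of_lt ham)) hbv hmb
  have hp₁I : p₁ ∈ Icc a b := ⟨le_of_lt hp₁.1, le_of_lt (lt_trans hp₁.2 hmb)⟩
  have hp₂I : p₂ ∈ Icc a b := ⟨le_of_lt (lt_trans ham hp₂.1), le_of_lt hp₂.2⟩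
  have hp₁₂ : p₁ ≠ p₂ := ne_of_lt (lt_trans hp₁.2 hp₂.1)
  set L := k₁ * k₂ with hLdef
  have hL : 0 < L := Nat.mul_pos hk₁ hk₂
  have hLfix₁ : g^[L] p₁ = p₁ := by
    rw [hLdef, Function.iterate_mul]
    exact Function.iterate_fixed hp₁fix k₂
  have hLfix₂ : g^[L] p₂ = p₂ := by
    rw [hLdef, show k₁ * k₂ = k₂ * k₁ from mul_comm k₁ k₂, Function.iterate_mul]
    exact Function.iterate_fixed hp₂fix k₁
  have key : g^[n] p₁ ≠ g^[n] p₂ := by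
    intro hcon
    have hM : ∀ p : ℝ, g^[L] p = p → p = g^[L*n - n] (g^[n] p) := by
      intro p hp
      have h1 : L*n - n + n = L*n := by
        have : n ≤ L*n := Nat.le_mul_of_pos_left n hL
        omega
      have h2 : g^[L*n] p = p := by
        rw [Function.iterate_mul]
        exact Function.iterate_fixed hp n
      calc p = g^[L*n] p := h2.symm
        _ = g^[L*n - n + n] p := by rw [h1]
        _ = g^[L*n - n] (g^[n] p) := Function.iterate_add_apply g _ n p
    have e₁ := hM p₁ hLfix₁
    have e₂ := hM p₂ hLfix₂
    rw [hcon] at e₁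
    exact hp₁₂ (e₁.trans e₂.symm)
  rcases lt_or_gt_of_ne key with h | h
  · exact ⟨g^[n] p₁, ⟨p₁, hp₁I, rfl⟩, g^[n] p₂, ⟨p₂, hp₂I, rfl⟩, h⟩
  · exact ⟨g^[n] p₂, ⟨p₂, hp₂I, rfl⟩, g^[n] p₁, ⟨p₁, hp₁I, rfl⟩, h⟩

section Machinery

lemma retAdd {A : Set ℝ} {r s : ℕ} (hr : A ⊆ g^[r] '' A) (hs : A ⊆ g^[s] '' A) :
    A ⊆ g^[r+s] '' A := by
  calc A ⊆ g^[s] '' A := hs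
    _ ⊆ g^[s] '' (g^[r] '' A) := Set.image_mono hr
    _ = g^[s+r] '' A := (imgAdd s r).symm
    _ = g^[r+s] '' A := by rw [add_comm]

lemma retSmul {A : Set ℝ} {r : ℕ} (hr : A ⊆ g^[r] '' A) :
    ∀ k : ℕ, 0 < k → A ⊆ g^[k*r] '' A := by
  intro k
  induction k with
  | zero => intro h; exact absurd h (lt_irrefl 0)
  | succ j ih =>
    intro _
    rcases Nat.eq_zero_or_pos j with hj | hj
    · subst hj; simpa [one_mul] using hr
    · have : (j+1)*r = j*r + r := by ring
      rw [this]
      exact retAdd (ih hj) hr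

lemma retCofinite {A : Set ℝ} {r : ℕ} (hr0 : 0 < r) (hr : A ⊆ g^[r] '' A)
    (hr1 : A ⊆ g^[r+1] '' A) : ∀ n : ℕ, r*r ≤ n → A ⊆ g^[n] '' A := by
  intro n hn
  set q := n / r with hq
  set s := n % r with hs
  have hsr : s < r := Nat.mod_lt _ hr0
  have hqr : r ≤ q := (Nat.le_div_iff_mul_le hr0).mpr hn
  have hrep : n = (q - s)*r + s*(r+1) := by
    have h1 : q * r + s = n := by rw [hq, hs, mul_comm]; exact Nat.div_add_mod n r
    have h2 : s ≤ q := le_trans (le_of_lt hsr) hqr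
    have h3 : s*r ≤ q*r := Nat.mul_le_mul_right r h2
    have h4 : (q - s)*r = q*r - s*r := Nat.sub_mul q s r
    have h5 : s*(r+1) = s*r + s := by ring
    omega
  rw [hrep]
  rcases Nat.eq_zero_or_pos s with hs0 | hs0
  · rw [hs0]
    simp only [Nat.zero_mul, Nat.add_zero, Nat.sub_zero]
    exact retSmul hr q (lt_of_lt_of_le hr0 hqr)
  · rcases Nat.eq_zero_or_pos (q - s) with hqs | hqs
    · rw [hqs]
      simp only [Nat.zero_mul, Nat.zero_add]
      exact retSmul hr1 s hs0
    · exact retAdd (retSmul hr _ hqs) (retSmul hr1 s hs0)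

/-- from the hull of a point and a fixed point, some iterate image covers a one-sided
interval with the fixed point as endpoint (the far end being interior). -/
lemma coverFromHull (hc : ContinuousOn g (Icc u v)) (hm : MapsTo g (Icc u v) (Icc u v))
    (ht : TransitiveOnS g (Icc u v)) {c' a₁ a₂ : ℝ} (hcfix : g c' = c')
    (hA : Icc a₁ a₂ ⊆ Icc u v) (ha : a₁ < a₂)
    (hor : (c' = a₂ ∧ u < a₁) ∨ (c' = a₁ ∧ a₂ < v))
    {ζ : ℝ} (hζI : ζ ∈ Icc u v) (hζ : ζ ≠ c') :
    ∃ s : ℕ, Icc a₁ a₂ ⊆ g^[s] '' (Icc (min ζ c') (max ζ c')) := by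
  have hcI : c' ∈ Icc u v := by
    rcases hor with ⟨h, _⟩ | ⟨h, _⟩
    · exact h ▸ hA ⟨le_of_lt ha, le_refl _⟩
    · exact h ▸ hA ⟨le_refl _, le_of_lt ha⟩
  have hmin : min ζ c' < max ζ c' := min_lt_max.mpr hζ
  have hHI : Icc (min ζ c') (max ζ c') ⊆ Icc u v := by
    intro w hw
    constructor
    · exact le_trans (le_min hζI.1 hcI.1) hw.1
    · exact le_trans hw.2 (max_le hζI.2 hcI.2)
  have hcH : c' ∈ Icc (min ζ c') (max ζ c') := ⟨min_le_right _ _, le_max_right _ _⟩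
  rcases hor with ⟨hce, hua⟩ | ⟨hce, hav⟩
  · -- A = [a₁, c'], dip below a₁
    obtain ⟨s, z, hz, hgz⟩ := dip ht hmin (fun w hw => hHI ⟨le_of_lt hw.1, le_of_lt hw.2⟩)
      (isOpen_Iio (a := a₁)) ⟨u, hua, le_refl u, le_trans hcI.1 hcI.2⟩
    refine ⟨s, ?_⟩
    intro w hw
    have hz1 : g^[s] z ∈ g^[s] '' (Icc (min ζ c') (max ζ c')) :=
      ⟨z, ⟨le_of_lt hz.1, le_of_lt hz.2⟩, rfl⟩
    have hz2 : c' ∈ g^[s] '' (Icc (min ζ c') (max ζ c')) := fixMemImg hcfix hcH s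
    exact memImgBetween hc hm (le_of_lt hmin) hHI s hz1 hz2
      (le_trans (le_of_lt hgz) hw.1) (by rw [hce]; exact hw.2)
  · -- A = [c', a₂], dip above a₂
    obtain ⟨s, z, hz, hgz⟩ := dip ht hmin (fun w hw => hHI ⟨le_of_lt hw.1, le_of_lt hw.2⟩)
      (isOpen_Ioi (a := a₂)) ⟨v, hav, le_trans hcI.1 hcI.2, le_refl v⟩
    refine ⟨s, ?_⟩
    intro w hw
    have hz1 : g^[s] z ∈ g^[s] '' (Icc (min ζ c') (max ζ c')) :=
      ⟨z, ⟨le_of_lt hz.1, le_of_lt hz.2⟩, rfl⟩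
    have hz2 : c' ∈ g^[s] '' (Icc (min ζ c') (max ζ c')) := fixMemImg hcfix hcH s
    exact memImgBetween hc hm (le_of_lt hmin) hHI s hz2 hz1
      (by rw [hce]; exact hw.1) (le_trans hw.2 (le_of_lt hgz))

end Machinery

section Helpers

lemma ordClosure {S : Set ℝ} (h : S.OrdConnected) : (closure S).OrdConnected := by
  constructor
  intro x hx y hy z hz
  rcases eq_or_lt_of_le hz.1 with rfl | hxz
  · exact hx
  rcases eq_or_lt_of_le hz.2 with rfl | hzy
  · exact hy
  have h1 : (Iio z ∩ S).Nonempty := mem_closure_iff.mp hx (Iio z) isOpen_Iio hxz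
  have h2 : (Ioi z ∩ S).Nonempty := mem_closure_iff.mp hy (Ioi z) isOpen_Ioi hzy
  obtain ⟨x', hx'⟩ := h1
  obtain ⟨y', hy'⟩ := h2
  exact subset_closure (h.out hx'.2 hy'.2 ⟨le_of_lt hx'.1, le_of_lt hy'.1⟩)

lemma unionOrd {ι : Sort*} {f : ι → Set ℝ} {x₀ : ℝ} (hord : ∀ i, (f i).OrdConnected)
    (hx : ∀ i, x₀ ∈ f i) : (⋃ i, f i).OrdConnected := by
  constructor
  rintro x hx' y hy' z hz
  obtain ⟨i, hxi⟩ := Set.mem_iUnion.mp hx'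
  obtain ⟨j, hyj⟩ := Set.mem_iUnion.mp hy'
  rcases le_total z x₀ with h | h
  · exact Set.mem_iUnion.mpr ⟨i, (hord i).out hxi (hx i) ⟨hz.1, h⟩⟩
  · exact Set.mem_iUnion.mpr ⟨j, (hord j).out (hx j) hyj ⟨h, hz.2⟩⟩

lemma iterModFixed {p : ℝ} {k : ℕ} (hp : g^[k] p = p) (j : ℕ) :
    g^[j] p = g^[j % k] p := by
  conv_lhs => rw [← Nat.mod_add_div j k]
  rw [Function.iterate_add_apply]
  congr 1
  rw [Function.iterate_mul]
  exact Function.iterate_fixed hp _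

lemma imgSucc {A : Set ℝ} (n : ℕ) : g^[n+1] '' A = g '' (g^[n] '' A) := by
  rw [Function.iterate_succ', Set.image_comp]

lemma invHalfLo (ht : TransitiveOnS g (Icc u v)) {c₁ : ℝ} (h1 : u < c₁) (h2 : c₁ < v)
    (hinv : g '' (Icc u c₁) ⊆ Icc u c₁) : False := by
  have hiter : ∀ n : ℕ, g^[n] '' (Icc u c₁) ⊆ Icc u c₁ := by
    intro n
    induction n with
    | zero => simp
    | succ m ih =>
      rw [imgSucc]
      exact subset_trans (Set.image_mono ih) hinv
  obtain ⟨n, x, hx, hgx⟩ := ptTrans ht (isOpen_Ioo (a := u) (b := c₁))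
    (isOpen_Ioo (a := c₁) (b := v))
    ⟨(u+c₁)/2, ⟨by linarith, by linarith⟩, by constructor <;> [linarith; linarith]⟩
    ⟨(c₁+v)/2, ⟨by linarith, by linarith⟩, by constructor <;> [linarith; linarith]⟩
  have hx1 : x ∈ Icc u c₁ := ⟨le_of_lt hx.1.1, le_of_lt hx.1.2⟩
  have : g^[n] x ∈ Icc u c₁ := hiter n ⟨x, hx1, rfl⟩
  exact absurd hgx.1 (not_lt.2 this.2)

lemma invHalfHi (ht : TransitiveOnS g (Icc u v)) {c₁ : ℝ} (h1 : u < c₁) (h2 : c₁ < v)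
    (hinv : g '' (Icc c₁ v) ⊆ Icc c₁ v) : False := by
  have hiter : ∀ n : ℕ, g^[n] '' (Icc c₁ v) ⊆ Icc c₁ v := by
    intro n
    induction n with
    | zero => simp
    | succ m ih =>
      rw [imgSucc]
      exact subset_trans (Set.image_mono ih) hinv
  obtain ⟨n, x, hx, hgx⟩ := ptTrans ht (isOpen_Ioo (a := c₁) (b := v))
    (isOpen_Ioo (a := u) (b := c₁))
    ⟨(c₁+v)/2, ⟨by linarith, by linarith⟩, by constructor <;> [linarith; linarith]⟩
    ⟨(u+c₁)/2, ⟨by linarith, by linarith⟩, by constructor <;> [linarith; linarith]⟩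
  have hx1 : x ∈ Icc c₁ v := ⟨le_of_lt hx.1.1, le_of_lt hx.1.2⟩
  have : g^[n] x ∈ Icc c₁ v := hiter n ⟨x, hx1, rfl⟩
  exact absurd hgx.2 (not_lt.2 this.1)

end Helpers

/-- If no image of the seed ever contains a fixed point, the map has swap structure. -/
lemma noCaptureSwap (hc : ContinuousOn g (Icc u v)) (hm : MapsTo g (Icc u v) (Icc u v))
    (ht : TransitiveOnS g (Icc u v)) {s t : ℝ} (hus : u < s) (hst : s < t) (htv : t < v)
    (hnc : ∀ n : ℕ, ∀ y ∈ g^[n] '' Icc s t, g y ≠ y) :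
    ∃ c, SwapAt g u v c := by
  have hseedI : Icc s t ⊆ Icc u v := fun x hx =>
    ⟨le_trans (le_of_lt hus) hx.1, le_trans hx.2 (le_of_lt htv)⟩
  obtain ⟨p, hp, k, hk, hpk⟩ := perdense hc hm ht (le_of_lt hus) (le_of_lt htv) hst
  have hpI : p ∈ Icc s t := ⟨le_of_lt hp.1, le_of_lt hp.2⟩
  have horbmem : ∀ j : ℕ, g^[j] p ∈ g^[j] '' Icc s t := fun j => ⟨p, hpI, rfl⟩
  have horbne : ∀ j : ℕ, g (g^[j] p) ≠ g^[j] p := fun j => hnc j _ (horbmem j)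
  have horbI : ∀ j : ℕ, g^[j] p ∈ Icc u v := fun j => iterMaps hm j (hseedI hpI)
  have horbshift : ∀ j tt : ℕ, g^[j + tt*k] p = g^[j] p := by
    intro j tt
    rw [iterModFixed hpk (j + tt*k), iterModFixed hpk j, Nat.add_mul_mod_self_right]
  -- orbit finset
  set O : Finset ℝ := (Finset.range k).image (fun j => g^[j] p) with hO
  have hOne : O.Nonempty := ⟨p, by
    simp only [hO, Finset.mem_image]
    exact ⟨0, Finset.mem_range.mpr hk, rfl⟩⟩
  set qlo := O.min' hOne with hqlo
  set qhi := O.max' hOne with hqhi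
  have hmemO : ∀ j : ℕ, g^[j] p ∈ O := by
    intro j
    rw [iterModFixed hpk j]
    simp only [hO, Finset.mem_image]
    exact ⟨j % k, Finset.mem_range.mpr (Nat.mod_lt _ hk), rfl⟩
  have hbound : ∀ j : ℕ, qlo ≤ g^[j] p ∧ g^[j] p ≤ qhi := fun j =>
    ⟨O.min'_le _ (hmemO j), O.le_max' _ (hmemO j)⟩
  obtain ⟨jlo, _, hjloe⟩ : ∃ j ∈ Finset.range k, g^[j] p = qlo := by
    have h : qlo ∈ O := O.min'_mem hOne
    rw [hO] at h
    simpa using Finset.mem_image.mp h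
  obtain ⟨jhi, _, hjhie⟩ : ∃ j ∈ Finset.range k, g^[j] p = qhi := by
    have h : qhi ∈ O := O.max'_mem hOne
    rw [hO] at h
    simpa using Finset.mem_image.mp h
  have hgqlo : qlo < g qlo ∧ g qlo ≤ qhi := by
    constructor
    · rcases lt_or_ge qlo (g qlo) with h | h
      · exact h
      · exfalso
        have h2 : g qlo = g^[jlo + 1] p := by
          rw [Function.iterate_succ', Function.comp_apply, hjloe]
        have h3 := (hbound (jlo+1)).1
        rw [← h2] at h3
        exact horbne jlo (by rw [hjloe]; exact le_antisymm h h3)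
    · have h2 : g qlo = g^[jlo + 1] p := by
        rw [Function.iterate_succ', Function.comp_apply, hjloe]
      rw [h2]; exact (hbound _).2
  have hgqhi : g qhi < qhi ∧ qlo ≤ g qhi := by
    constructor
    · rcases lt_or_ge (g qhi) qhi with h | h
      · exact h
      · exfalso
        have h2 : g qhi = g^[jhi + 1] p := by
          rw [Function.iterate_succ', Function.comp_apply, hjhie]
        have h3 := (hbound (jhi+1)).2
        rw [← h2] at h3
        exact horbne jhi (by rw [hjhie]; exact le_antisymm h3 h)
    · have h2 : g qhi = g^[jhi + 1] p := by
        rw [Function.iterate_succ', Function.comp_apply, hjhie]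
      rw [h2]; exact (hbound _).1
  have hloI : qlo ∈ Icc u v := hjloe ▸ horbI jlo
  have hhiI : qhi ∈ Icc u v := hjhie ▸ horbI jhi
  have hlohi : qlo < qhi := by
    rcases lt_or_ge qlo qhi with h | h
    · exact h
    · exfalso
      have h1 : qhi ≤ qlo := h
      have h2 : qlo ≤ g qlo := le_of_lt hgqlo.1
      have h3 : g qlo ≤ qhi := hgqlo.2
      exact absurd (le_trans h3 h1) (not_le.2 hgqlo.1)
  -- fixed point in (qlo, qhi)
  have hsubqI : Icc qlo qhi ⊆ Icc u v := fun x hx =>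
    ⟨le_trans hloI.1 hx.1, le_trans hx.2 hhiI.2⟩
  obtain ⟨c₁, hc₁mem, hc₁fix0⟩ : ∃ c₁ ∈ Icc qlo qhi, g c₁ - c₁ = 0 := by
    have hφ : ContinuousOn (fun x => g x - x) (Icc qlo qhi) :=
      (hc.mono hsubqI).sub continuousOn_id
    have h2 := intermediate_value_Icc' (le_of_lt hlohi) hφ
    have h0 : (0:ℝ) ∈ Icc (g qhi - qhi) (g qlo - qlo) :=
      ⟨by linarith [hgqhi.1], by linarith [hgqlo.1]⟩
    obtain ⟨c₁, hc₁, hfc⟩ := h2 h0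
    exact ⟨c₁, hc₁, hfc⟩
  have hc₁fix : g c₁ = c₁ := by linarith [hc₁fix0]
  have hc₁lo : qlo < c₁ := by
    rcases eq_or_lt_of_le hc₁mem.1 with h | h
    · exfalso; rw [← h] at hc₁fix; exact absurd hc₁fix (ne_of_gt hgqlo.1)
    · exact h
  have hc₁hi : c₁ < qhi := by
    rcases eq_or_lt_of_le hc₁mem.2 with h | h
    · exfalso; rw [h] at hc₁fix; exact absurd hc₁fix (ne_of_lt hgqhi.1)
    · exact h
  have hc₁uv : c₁ ∈ Ioo u v := ⟨lt_of_le_of_lt hloI.1 hc₁lo, lt_of_lt_of_le hc₁hi hhiI.2⟩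
  set J : ℕ → Set ℝ := fun n => g^[n] '' Icc s t with hJ
  have hJI : ∀ n, J n ⊆ Icc u v := fun n => imgSub hm hseedI n
  have hornJ : ∀ n, g^[n] p ∈ J n := horbmem
  have hc₁notJ : ∀ n, c₁ ∉ J n := fun n h => hnc n c₁ h hc₁fix
  have horbne₁ : ∀ n, g^[n] p ≠ c₁ := by
    intro n h
    exact hc₁notJ n (h ▸ hornJ n)
  have hsideIio : ∀ n, g^[n] p < c₁ → J n ⊆ Iio c₁ := by
    intro n hs y hy
    by_contra hcon
    simp only [Set.mem_Iio, not_lt] at hcon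
    exact hc₁notJ n (memImgBetween hc hm (le_of_lt hst) hseedI n (hornJ n) hy (le_of_lt hs) hcon)
  have hsideIoi : ∀ n, ¬ (g^[n] p < c₁) → J n ⊆ Ioi c₁ := by
    intro n hs y hy
    have h1 : c₁ < g^[n] p := lt_of_le_of_ne (not_lt.mp hs) (Ne.symm (horbne₁ n))
    by_contra hcon
    simp only [Set.mem_Ioi, not_lt] at hcon
    exact hc₁notJ n (memImgBetween hc hm (le_of_lt hst) hseedI n hy (hornJ n) hcon (le_of_lt h1))
  set M : ℕ → Set ℝ := fun j => closure (⋃ tt : ℕ, J (j + tt*k)) with hM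
  have hMI : ∀ j, M j ⊆ Icc u v := fun j =>
    closure_minimal (Set.iUnion_subset fun _ => hJI _) isClosed_Icc
  have hanchor : ∀ j tt, g^[j] p ∈ J (j + tt*k) := by
    intro j tt
    have h1 := hornJ (j + tt*k)
    rwa [horbshift] at h1
  have hMord : ∀ j, (M j).OrdConnected := fun j =>
    ordClosure (unionOrd (fun _ => imgOrd hc hm (le_of_lt hst) hseedI _) (fun tt => hanchor j tt))
  have hMsideL : ∀ j, g^[j] p < c₁ → M j ⊆ Iic c₁ := by
    intro j hs
    refine closure_minimal (Set.iUnion_subset fun tt => ?_) isClosed_Iic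
    intro y hy
    have h1 : g^[j + tt*k] p < c₁ := by rw [horbshift]; exact hs
    exact le_of_lt (Set.mem_Iio.mp (hsideIio _ h1 hy))
  have hMsideR : ∀ j, ¬ (g^[j] p < c₁) → M j ⊆ Ici c₁ := by
    intro j hs
    refine closure_minimal (Set.iUnion_subset fun tt => ?_) isClosed_Ici
    intro y hy
    have h1 : ¬ (g^[j + tt*k] p < c₁) := by rw [horbshift]; exact hs
    exact le_of_lt (Set.mem_Ioi.mp (hsideIoi _ h1 hy))
  have hMg : ∀ j, g '' M j ⊆ M (j+1) := by
    intro j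
    have hcont : ContinuousOn g (closure (⋃ tt : ℕ, J (j + tt*k))) := hc.mono (hMI j)
    refine subset_trans hcont.image_closure (closure_mono ?_)
    rw [Set.image_iUnion]
    refine Set.iUnion_subset fun tt => ?_
    have h2 : g '' J (j + tt*k) = J (j + tt*k + 1) := by
      rw [hJ]; exact (imgSucc _).symm
    rw [h2, show j + tt*k + 1 = (j+1) + tt*k by ring]
    exact Set.subset_iUnion (fun tt => J ((j+1) + tt*k)) tt
  have hMshift : ∀ j, M (j+k) ⊆ M j := by
    intro j
    refine closure_mono (Set.iUnion_subset fun tt => ?_)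
    rw [show j + k + tt*k = j + (tt+1)*k by ring]
    exact Set.subset_iUnion (fun tt => J (j + tt*k)) (tt+1)
  have hcover : ∀ w ∈ Icc u v, ∃ j, j < k ∧ w ∈ M j := by
    intro w hw
    have hwc : w ∈ closure (⋃ n : ℕ, J n) := by
      rw [mem_closure_iff]
      intro Oo hOo hwO
      obtain ⟨n, x, hx, hgx⟩ := ptTrans ht (isOpen_Ioo (a := s) (b := t)) hOo
        ⟨(s+t)/2, Set.mem_Ioo.mpr ⟨by linarith, by linarith⟩,
          hseedI (Set.mem_Icc.mpr ⟨by linarith, by linarith⟩)⟩ ⟨w, hwO, hw⟩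
      exact ⟨g^[n] x, hgx,
        Set.mem_iUnion.mpr ⟨n, ⟨x, ⟨le_of_lt hx.1.1, le_of_lt hx.1.2⟩, rfl⟩⟩⟩
    have hsubC : closure (⋃ n : ℕ, J n) ⊆ ⋃ j ∈ Finset.range k, M j := by
      refine closure_minimal ?_ ?_
      · refine Set.iUnion_subset fun n => ?_
        intro y hy
        refine Set.mem_biUnion (x := n % k) (Finset.mem_range.mpr (Nat.mod_lt n hk)) ?_
        refine subset_closure (Set.mem_iUnion.mpr ⟨n/k, ?_⟩)
        rw [show n % k + (n/k)*k = n by rw [mul_comm]; exact Nat.mod_add_div n k]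
        exact hy
      · exact (Finset.range k).finite_toSet.isClosed_biUnion (fun j _ => isClosed_closure)
    obtain ⟨j, hj, hwj⟩ := Set.mem_iUnion₂.mp (hsubC hwc)
    exact ⟨j, Finset.mem_range.mp hj, hwj⟩
  have hc₁M : ∀ j, c₁ ∈ M j := by
    obtain ⟨j₀, hj₀, hj₀m⟩ := hcover c₁ ⟨le_of_lt hc₁uv.1, le_of_lt hc₁uv.2⟩
    have hfwd : ∀ i, c₁ ∈ M (j₀ + i) := by
      intro i
      induction i with
      | zero => simpa using hj₀m
      | succ m ih =>
        have h1 : c₁ ∈ g '' M (j₀ + m) := ⟨c₁, ih, hc₁fix⟩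
        have h2 := hMg (j₀ + m) h1
        rwa [show j₀ + m + 1 = j₀ + (m+1) by ring] at h2
    intro j
    have hi : j₀ + (j + k - j₀) = j + k := by omega
    have h3 := hfwd (j + k - j₀)
    rw [hi] at h3
    exact hMshift j h3
  obtain ⟨ju, _, hum⟩ := hcover u ⟨le_refl u, le_of_lt (lt_trans hc₁uv.1 hc₁uv.2)⟩
  have hjuL : g^[ju] p < c₁ := by
    by_contra hcon
    exact absurd (hMsideR ju hcon hum) (not_le.2 hc₁uv.1)
  have hIccu : Icc u c₁ ⊆ M ju := fun w hw => (hMord ju).out hum (hc₁M ju) hw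
  have hMju1 : g '' Icc u c₁ ⊆ M (ju + 1) :=
    subset_trans (Set.image_mono hIccu) (hMg ju)
  obtain ⟨jv, _, hvm⟩ := hcover v ⟨le_of_lt (lt_trans hc₁uv.1 hc₁uv.2), le_refl v⟩
  have hjvR : ¬ g^[jv] p < c₁ := by
    intro hcon
    exact absurd (hMsideL jv hcon hvm) (not_le.2 hc₁uv.2)
  have hIccv : Icc c₁ v ⊆ M jv := fun w hw => (hMord jv).out (hc₁M jv) hvm hw
  have hMjv1 : g '' Icc c₁ v ⊆ M (jv + 1) :=
    subset_trans (Set.image_mono hIccv) (hMg jv)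
  have half1 : g '' Icc u c₁ ⊆ Icc c₁ v := by
    by_cases hs : g^[ju+1] p < c₁
    · exfalso
      have h1 : M (ju+1) ⊆ Iic c₁ := hMsideL _ hs
      have h2 : g '' Icc u c₁ ⊆ Icc u c₁ := by
        intro y hy
        have hy1 := hMju1 hy
        exact ⟨(hMI _ hy1).1, h1 hy1⟩
      exact invHalfLo ht hc₁uv.1 hc₁uv.2 h2
    · intro y hy
      have hy1 := hMju1 hy
      exact ⟨hMsideR _ hs hy1, (hMI _ hy1).2⟩
  have half2 : g '' Icc c₁ v ⊆ Icc u c₁ := by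
    by_cases hs : g^[jv+1] p < c₁
    · intro y hy
      have hy1 := hMjv1 hy
      exact ⟨(hMI _ hy1).1, hMsideL _ hs hy1⟩
    · exfalso
      have h1 : M (jv+1) ⊆ Ici c₁ := hMsideR _ hs
      have h2 : g '' Icc c₁ v ⊆ Icc c₁ v := by
        intro y hy
        have hy1 := hMjv1 hy
        exact ⟨h1 hy1, (hMI _ hy1).2⟩
      exact invHalfHi ht hc₁uv.1 hc₁uv.2 h2
  exact ⟨c₁, hc₁uv, half1, half2⟩

lemma eventualCover (hc : ContinuousOn g (Icc u v)) (hm : MapsTo g (Icc u v) (Icc u v))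
    (ht : TransitiveOnS g (Icc u v)) {a₁ a₂ : ℝ} (hA : Icc a₁ a₂ ⊆ Icc u v) (ha : a₁ < a₂)
    {N₀ : ℕ} (hcof : ∀ n ≥ N₀, Icc a₁ a₂ ⊆ g^[n] '' Icc a₁ a₂)
    {w : ℝ} (hw : w ∈ Ioo u v) : ∃ N, ∀ n ≥ N, w ∈ g^[n] '' Icc a₁ a₂ := by
  have huv : u < v := lt_trans hw.1 hw.2
  have hIooA : Ioo a₁ a₂ ⊆ Icc u v := fun x hx => hA ⟨le_of_lt hx.1, le_of_lt hx.2⟩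
  obtain ⟨n₁, z₁, hz₁, hgz₁⟩ := dip ht ha hIooA (isOpen_Iio (a := w))
    ⟨u, hw.1, le_refl u, le_of_lt huv⟩
  obtain ⟨n₂, z₂, hz₂, hgz₂⟩ := dip ht ha hIooA (isOpen_Ioi (a := w))
    ⟨v, hw.2, le_of_lt huv, le_refl v⟩
  refine ⟨max (n₁ + N₀) (n₂ + N₀), fun n hn => ?_⟩
  have step : ∀ (m : ℕ) (z : ℝ), z ∈ Icc a₁ a₂ → m + N₀ ≤ n →
      g^[m] z ∈ g^[n] '' Icc a₁ a₂ := by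
    intro m z hz hmn
    have h2 : Icc a₁ a₂ ⊆ g^[n - m] '' Icc a₁ a₂ := hcof _ (by omega)
    have h3 : g^[m] '' Icc a₁ a₂ ⊆ g^[n] '' Icc a₁ a₂ := by
      calc g^[m] '' Icc a₁ a₂ ⊆ g^[m] '' (g^[n-m] '' Icc a₁ a₂) := Set.image_mono h2
        _ = g^[m + (n-m)] '' Icc a₁ a₂ := (imgAdd m (n-m)).symm
        _ = g^[n] '' Icc a₁ a₂ := by rw [show m + (n-m) = n by omega]
    exact h3 ⟨z, hz, rfl⟩
  have hp1 := step n₁ z₁ ⟨le_of_lt hz₁.1, le_of_lt hz₁.2⟩ (le_trans (le_max_left _ _) hn)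
  have hp2 := step n₂ z₂ ⟨le_of_lt hz₂.1, le_of_lt hz₂.2⟩ (le_trans (le_max_right _ _) hn)
  exact memImgBetween hc hm (le_of_lt ha) hA n hp1 hp2
    (le_of_lt (Set.mem_Iio.mp hgz₁)) (le_of_lt (Set.mem_Ioi.mp hgz₂))

/-- abstract "alternating sides" swap construction -/
lemma swapFromSides (hc : ContinuousOn g (Icc u v)) (hm : MapsTo g (Icc u v) (Icc u v))
    (ht : TransitiveOnS g (Icc u v)) {c₁ : ℝ} (hc₁uv : c₁ ∈ Ioo u v) (hc₁fix : g c₁ = c₁)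
    {X : ℕ → Set ℝ} {k : ℕ} {flag : ℕ → Prop} (hk : 0 < k)
    (hXI : ∀ n, X n ⊆ Icc u v)
    (hXord : ∀ n, (X n).OrdConnected)
    (hXg : ∀ n, g '' X n ⊆ X (n+1))
    (hanch : ∀ j : ℕ, ∃ x₀, ∀ tt : ℕ, x₀ ∈ X (j + tt*k))
    (hflag : ∀ n, (flag n → X n ⊆ Iic c₁) ∧ (¬ flag n → X n ⊆ Ici c₁))
    (hflagper : ∀ j tt, flag (j + tt*k) ↔ flag j)
    (hdense : ∀ w ∈ Icc u v, w ∈ closure (⋃ n, X n)) :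
    SwapAt g u v c₁ := by
  set M : ℕ → Set ℝ := fun j => closure (⋃ tt : ℕ, X (j + tt*k)) with hM
  have hMI : ∀ j, M j ⊆ Icc u v := fun j =>
    closure_minimal (Set.iUnion_subset fun _ => hXI _) isClosed_Icc
  have hMord : ∀ j, (M j).OrdConnected := by
    intro j
    obtain ⟨x₀, hx₀⟩ := hanch j
    exact ordClosure (unionOrd (fun tt => hXord _) hx₀)
  have hMsideL : ∀ j, flag j → M j ⊆ Iic c₁ := by
    intro j hs
    refine closure_minimal (Set.iUnion_subset fun tt => ?_) isClosed_Iic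
    exact (hflag _).1 ((hflagper j tt).mpr hs)
  have hMsideR : ∀ j, ¬ flag j → M j ⊆ Ici c₁ := by
    intro j hs
    refine closure_minimal (Set.iUnion_subset fun tt => ?_) isClosed_Ici
    exact (hflag _).2 (fun h => hs ((hflagper j tt).mp h))
  have hMg : ∀ j, g '' M j ⊆ M (j+1) := by
    intro j
    have hcont : ContinuousOn g (closure (⋃ tt : ℕ, X (j + tt*k))) := hc.mono (hMI j)
    refine subset_trans hcont.image_closure (closure_mono ?_)
    rw [Set.image_iUnion]
    refine Set.iUnion_subset fun tt => ?_
    refine subset_trans (hXg _) ?_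
    rw [show j + tt*k + 1 = (j+1) + tt*k by ring]
    exact Set.subset_iUnion (fun tt => X ((j+1) + tt*k)) tt
  have hMshift : ∀ j, M (j+k) ⊆ M j := by
    intro j
    refine closure_mono (Set.iUnion_subset fun tt => ?_)
    rw [show j + k + tt*k = j + (tt+1)*k by ring]
    exact Set.subset_iUnion (fun tt => X (j + tt*k)) (tt+1)
  have hcover : ∀ w ∈ Icc u v, ∃ j, j < k ∧ w ∈ M j := by
    intro w hw
    have hsubC : closure (⋃ n : ℕ, X n) ⊆ ⋃ j ∈ Finset.range k, M j := by
      refine closure_minimal ?_ ?_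
      · refine Set.iUnion_subset fun n => ?_
        intro y hy
        refine Set.mem_biUnion (x := n % k) (Finset.mem_range.mpr (Nat.mod_lt n hk)) ?_
        refine subset_closure (Set.mem_iUnion.mpr ⟨n/k, ?_⟩)
        rw [show n % k + (n/k)*k = n by rw [mul_comm]; exact Nat.mod_add_div n k]
        exact hy
      · exact (Finset.range k).finite_toSet.isClosed_biUnion (fun j _ => isClosed_closure)
    obtain ⟨j, hj, hwj⟩ := Set.mem_iUnion₂.mp (hsubC (hdense w hw))
    exact ⟨j, Finset.mem_range.mp hj, hwj⟩
  have hc₁M : ∀ j, c₁ ∈ M j := by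
    obtain ⟨j₀, hj₀, hj₀m⟩ := hcover c₁ ⟨le_of_lt hc₁uv.1, le_of_lt hc₁uv.2⟩
    have hfwd : ∀ i, c₁ ∈ M (j₀ + i) := by
      intro i
      induction i with
      | zero => simpa using hj₀m
      | succ m ih =>
        have h1 : c₁ ∈ g '' M (j₀ + m) := ⟨c₁, ih, hc₁fix⟩
        have h2 := hMg (j₀ + m) h1
        rwa [show j₀ + m + 1 = j₀ + (m+1) by ring] at h2
    intro j
    have hi : j₀ + (j + k - j₀) = j + k := by omega
    have h3 := hfwd (j + k - j₀)
    rw [hi] at h3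
    exact hMshift j h3
  obtain ⟨ju, _, hum⟩ := hcover u ⟨le_refl u, le_of_lt (lt_trans hc₁uv.1 hc₁uv.2)⟩
  have hIccu : Icc u c₁ ⊆ M ju := fun w hw => (hMord ju).out hum (hc₁M ju) hw
  have hMju1 : g '' Icc u c₁ ⊆ M (ju + 1) :=
    subset_trans (Set.image_mono hIccu) (hMg ju)
  obtain ⟨jv, _, hvm⟩ := hcover v ⟨le_of_lt (lt_trans hc₁uv.1 hc₁uv.2), le_refl v⟩
  have hIccv : Icc c₁ v ⊆ M jv := fun w hw => (hMord jv).out (hc₁M jv) hvm hw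
  have hMjv1 : g '' Icc c₁ v ⊆ M (jv + 1) :=
    subset_trans (Set.image_mono hIccv) (hMg jv)
  have half1 : g '' Icc u c₁ ⊆ Icc c₁ v := by
    by_cases hs : flag (ju+1)
    · exfalso
      have h1 : M (ju+1) ⊆ Iic c₁ := hMsideL _ hs
      have h2 : g '' Icc u c₁ ⊆ Icc u c₁ := by
        intro y hy
        have hy1 := hMju1 hy
        exact ⟨(hMI _ hy1).1, h1 hy1⟩
      exact invHalfLo ht hc₁uv.1 hc₁uv.2 h2
    · intro y hy
      have hy1 := hMju1 hy
      exact ⟨hMsideR _ hs hy1, (hMI _ hy1).2⟩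
  have half2 : g '' Icc c₁ v ⊆ Icc u c₁ := by
    by_cases hs : flag (jv+1)
    · intro y hy
      have hy1 := hMjv1 hy
      exact ⟨(hMI _ hy1).1, hMsideL _ hs hy1⟩
    · exfalso
      have h1 : M (jv+1) ⊆ Ici c₁ := hMsideR _ hs
      have h2 : g '' Icc c₁ v ⊆ Icc c₁ v := by
        intro y hy
        have hy1 := hMjv1 hy
        exact ⟨h1 hy1, (hMI _ hy1).2⟩
      exact invHalfHi ht hc₁uv.1 hc₁uv.2 h2
  exact ⟨hc₁uv, half1, half2⟩

lemma captureCase (hc : ContinuousOn g (Icc u v)) (hm : MapsTo g (Icc u v) (Icc u v))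
    (ht : TransitiveOnS g (Icc u v)) {s t : ℝ} (hus : u < s) (hst : s < t) (htv : t < v)
    {c' : ℝ} (hcfix : g c' = c') {m₀ : ℕ} (hcap : c' ∈ g^[m₀] '' Icc s t) :
    (∀ w ∈ Ioo u v, ∃ N, ∀ n ≥ N, w ∈ g^[n] '' Icc s t) ∨ (∃ c, SwapAt g u v c) := by
  have hseedI : Icc s t ⊆ Icc u v := fun x hx =>
    ⟨le_trans (le_of_lt hus) hx.1, le_trans hx.2 (le_of_lt htv)⟩
  obtain ⟨z₁, hz₁, z₂, hz₂, hz₁₂⟩ := ncImg hc hm ht (le_of_lt hus) (le_of_lt htv) hst m₀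
  have horient : ∃ a₁ a₂ : ℝ, a₁ < a₂ ∧ Icc a₁ a₂ ⊆ g^[m₀] '' Icc s t ∧
      ((c' = a₂ ∧ u < a₁) ∨ (c' = a₁ ∧ a₂ < v)) := by
    by_cases hL : ∃ z ∈ g^[m₀] '' Icc s t, z < c'
    · obtain ⟨z, hzm, hzc⟩ := hL
      have hzI : z ∈ Icc u v := imgSub hm hseedI m₀ hzm
      have huc : u < c' := lt_of_le_of_lt hzI.1 hzc
      refine ⟨max z ((u + c')/2), c', max_lt hzc (by linarith), ?_,
        Or.inl ⟨rfl, lt_of_lt_of_le (by linarith) (le_max_right _ _)⟩⟩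
      intro w hw
      exact memImgBetween hc hm (le_of_lt hst) hseedI m₀ hzm hcap
        (le_trans (le_max_left _ _) hw.1) hw.2
    · push_neg at hL
      have h2 : c' < z₂ := lt_of_le_of_lt (hL z₁ hz₁) hz₁₂
      have hz₂I : z₂ ∈ Icc u v := imgSub hm hseedI m₀ hz₂
      have hcv : c' < v := lt_of_lt_of_le h2 hz₂I.2
      refine ⟨c', min z₂ ((c' + v)/2), lt_min h2 (by linarith), ?_,
        Or.inr ⟨rfl, lt_of_le_of_lt (min_le_right _ _) (by linarith)⟩⟩
      intro w hw
      exact memImgBetween hc hm (le_of_lt hst) hseedI m₀ hcap hz₂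
        hw.1 (le_trans hw.2 (min_le_left _ _))
  obtain ⟨a₁, a₂, haa, hsubA, hor⟩ := horient
  have hAI : Icc a₁ a₂ ⊆ Icc u v := subset_trans hsubA (imgSub hm hseedI m₀)
  have hc'A : c' ∈ Icc a₁ a₂ := by
    rcases hor with ⟨h, _⟩ | ⟨h, _⟩
    · exact ⟨by rw [h]; exact le_of_lt haa, by rw [h]⟩
    · exact ⟨by rw [h], by rw [h]; exact le_of_lt haa⟩
  set X : ℕ → Set ℝ := fun n => g^[n] '' Icc a₁ a₂ with hX
  have hc'X : ∀ n, c' ∈ X n := fun n => fixMemImg hcfix hc'A n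
  have hXI : ∀ n, X n ⊆ Icc u v := fun n => imgSub hm hAI n
  have hXord : ∀ n, (X n).OrdConnected := fun n => imgOrd hc hm (le_of_lt haa) hAI n
  have hua₁ : u ≤ a₁ := (hAI ⟨le_refl _, le_of_lt haa⟩).1
  have ha₂v : a₂ ≤ v := (hAI ⟨le_of_lt haa, le_refl _⟩).2
  have hXnd : ∀ n, ∃ w₁ ∈ X n, ∃ w₂ ∈ X n, w₁ < w₂ := fun n => ncImg hc hm ht hua₁ ha₂v haa n
  have hLR : ∀ n, (∃ zz ∈ X n, zz < c') ∨ (∃ zz ∈ X n, c' < zz) := by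
    intro n
    obtain ⟨w₁, hw₁, w₂, hw₂, hww⟩ := hXnd n
    rcases lt_or_ge w₁ c' with h | h
    · exact Or.inl ⟨w₁, hw₁, h⟩
    · exact Or.inr ⟨w₂, hw₂, lt_of_le_of_lt h hww⟩
  by_cases hcase : ∃ n, ((∃ zz ∈ X n, zz < c') ∧ (∃ zz ∈ X (n+1), zz < c')) ∨
      ((∃ zz ∈ X n, c' < zz) ∧ (∃ zz ∈ X (n+1), c' < zz))
  · left
    obtain ⟨n, hpair⟩ := hcase
    have hret : ∃ σ : ℕ, Icc a₁ a₂ ⊆ g^[σ + n] '' Icc a₁ a₂ ∧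
        Icc a₁ a₂ ⊆ g^[σ + (n+1)] '' Icc a₁ a₂ := by
      rcases hpair with ⟨⟨p₁, hp₁, hp₁c⟩, ⟨p₂, hp₂, hp₂c⟩⟩ | ⟨⟨p₁, hp₁, hp₁c⟩, ⟨p₂, hp₂, hp₂c⟩⟩
      · set ζ := max p₁ p₂ with hζdef
        have hζc : ζ < c' := max_lt hp₁c hp₂c
        have hζI : ζ ∈ Icc u v := by
          have h1 := hXI n hp₁
          have h2 := hXI (n+1) hp₂
          exact ⟨le_trans h1.1 (le_max_left _ _), max_le h1.2 h2.2⟩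
        obtain ⟨σ, hσ⟩ := coverFromHull hc hm ht hcfix hAI haa hor hζI (ne_of_lt hζc)
        rw [min_eq_left (le_of_lt hζc), max_eq_right (le_of_lt hζc)] at hσ
        have hhn : Icc ζ c' ⊆ X n := fun w hw =>
          memImgBetween hc hm (le_of_lt haa) hAI n hp₁ (hc'X n)
            (le_trans (le_max_left _ _) hw.1) hw.2
        have hhn1 : Icc ζ c' ⊆ X (n+1) := fun w hw =>
          memImgBetween hc hm (le_of_lt haa) hAI (n+1) hp₂ (hc'X (n+1))
            (le_trans (le_max_right _ _) hw.1) hw.2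
        refine ⟨σ, subset_trans hσ ?_, subset_trans hσ ?_⟩
        · calc g^[σ] '' Icc ζ c' ⊆ g^[σ] '' X n := Set.image_mono hhn
            _ = g^[σ + n] '' Icc a₁ a₂ := (imgAdd σ n).symm
        · calc g^[σ] '' Icc ζ c' ⊆ g^[σ] '' X (n+1) := Set.image_mono hhn1
            _ = g^[σ + (n+1)] '' Icc a₁ a₂ := (imgAdd σ (n+1)).symm
      · set ζ := min p₁ p₂ with hζdef
        have hζc : c' < ζ := lt_min hp₁c hp₂c
        have hζI : ζ ∈ Icc u v := by
          have h1 := hXI n hp₁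
          have h2 := hXI (n+1) hp₂
          exact ⟨le_min h1.1 h2.1, le_trans (min_le_left _ _) h1.2⟩
        obtain ⟨σ, hσ⟩ := coverFromHull hc hm ht hcfix hAI haa hor hζI (ne_of_gt hζc)
        rw [min_eq_right (le_of_lt hζc), max_eq_left (le_of_lt hζc)] at hσ
        have hhn : Icc c' ζ ⊆ X n := fun w hw =>
          memImgBetween hc hm (le_of_lt haa) hAI n (hc'X n) hp₁
            hw.1 (le_trans hw.2 (min_le_left _ _))
        have hhn1 : Icc c' ζ ⊆ X (n+1) := fun w hw =>
          memImgBetween hc hm (le_of_lt haa) hAI (n+1) (hc'X (n+1)) hp₂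
            hw.1 (le_trans hw.2 (min_le_right _ _))
        refine ⟨σ, subset_trans hσ ?_, subset_trans hσ ?_⟩
        · calc g^[σ] '' Icc c' ζ ⊆ g^[σ] '' X n := Set.image_mono hhn
            _ = g^[σ + n] '' Icc a₁ a₂ := (imgAdd σ n).symm
        · calc g^[σ] '' Icc c' ζ ⊆ g^[σ] '' X (n+1) := Set.image_mono hhn1
            _ = g^[σ + (n+1)] '' Icc a₁ a₂ := (imgAdd σ (n+1)).symm
    obtain ⟨σ, hr, hr1⟩ := hret
    have hr1' : Icc a₁ a₂ ⊆ g^[(σ+n) + 1] '' Icc a₁ a₂ := by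
      rwa [show σ + (n+1) = (σ+n)+1 by ring] at hr1
    obtain ⟨N₀, hcof⟩ : ∃ N₀, ∀ n' ≥ N₀, Icc a₁ a₂ ⊆ g^[n'] '' Icc a₁ a₂ := by
      rcases Nat.eq_zero_or_pos (σ + n) with h0 | h0
      · have h1 : Icc a₁ a₂ ⊆ g^[1] '' Icc a₁ a₂ := by
          rw [h0, Nat.zero_add] at hr1'
          exact hr1'
        exact ⟨1*1, fun n' hn' => retCofinite one_pos h1 (retAdd h1 h1) n' hn'⟩
      · exact ⟨(σ+n)*(σ+n), fun n' hn' => retCofinite h0 hr hr1' n' hn'⟩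
    intro w hw
    obtain ⟨N, hN⟩ := eventualCover hc hm ht hAI haa hcof hw
    refine ⟨N + m₀, fun n' hn' => ?_⟩
    have h5 : w ∈ g^[n' - m₀] '' Icc a₁ a₂ := hN _ (by omega)
    have h6 : g^[n' - m₀] '' Icc a₁ a₂ ⊆ g^[n'] '' Icc s t := by
      calc g^[n'-m₀] '' Icc a₁ a₂ ⊆ g^[n'-m₀] '' (g^[m₀] '' Icc s t) :=
            Set.image_mono hsubA
        _ = g^[(n'-m₀) + m₀] '' Icc s t := (imgAdd _ _).symm
        _ = g^[n'] '' Icc s t := by rw [show (n'-m₀) + m₀ = n' by omega]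
    exact h6 h5
  · right
    have hnp : ∀ n, ¬(((∃ zz ∈ X n, zz < c') ∧ (∃ zz ∈ X (n+1), zz < c')) ∨
        ((∃ zz ∈ X n, c' < zz) ∧ (∃ zz ∈ X (n+1), c' < zz))) := fun n h => hcase ⟨n, h⟩
    have hexcl : ∀ n, (∃ zz ∈ X n, zz < c') → (∃ zz ∈ X n, c' < zz) → False := by
      intro n hl hr
      rcases hLR (n+1) with h | h
      · exact hnp n (Or.inl ⟨hl, h⟩)
      · exact hnp n (Or.inr ⟨hr, h⟩)
    have hflag : ∀ n, ((∃ zz ∈ X n, zz < c') → X n ⊆ Iic c') ∧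
        (¬ (∃ zz ∈ X n, zz < c') → X n ⊆ Ici c') := by
      intro n
      constructor
      · intro hl y hy
        by_contra hcon
        simp only [Set.mem_Iic, not_le] at hcon
        exact hexcl n hl ⟨y, hy, hcon⟩
      · intro hl y hy
        by_contra hcon
        simp only [Set.mem_Ici, not_le] at hcon
        exact hl ⟨y, hy, hcon⟩
    have halt : ∀ n, (∃ zz ∈ X (n+1), zz < c') ↔ ¬ (∃ zz ∈ X n, zz < c') := by
      intro n
      constructor
      · intro h1 h0
        exact hnp n (Or.inl ⟨h0, h1⟩)
      · intro h0
        have hr : ∃ zz ∈ X n, c' < zz := (hLR n).resolve_left h0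
        rcases hLR (n+1) with h | h
        · exact h
        · exact absurd h (fun hh => hnp n (Or.inr ⟨hr, hh⟩))
    have hflagper : ∀ j tt, (∃ zz ∈ X (j + tt*2), zz < c') ↔ (∃ zz ∈ X j, zz < c') := by
      intro j tt
      induction tt with
      | zero => simp
      | succ m ih =>
        have h1 : j + (m+1)*2 = ((j + m*2) + 1) + 1 := by ring
        rw [h1, halt, halt, not_not, ih]
    -- c' interior
    have hc'uv : c' ∈ Ioo u v := by
      rcases hor with ⟨he, hu1⟩ | ⟨he, hv1⟩
      · have hL0 : ∃ zz ∈ X 0, zz < c' := by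
          refine ⟨a₁, ⟨a₁, ⟨le_refl _, le_of_lt haa⟩, by simp⟩, ?_⟩
          rw [he]; exact haa
        have hR1 : ∃ zz ∈ X 1, c' < zz := by
          have h0 : ¬ (∃ zz ∈ X 1, zz < c') := fun hh => hnp 0 (Or.inl ⟨hL0, hh⟩)
          exact (hLR 1).resolve_left h0
        obtain ⟨zz, hzz, hzzc⟩ := hR1
        refine ⟨?_, lt_of_lt_of_le hzzc (hXI 1 hzz).2⟩
        rw [he]; exact lt_trans hu1 haa
      · have hR0 : ∃ zz ∈ X 0, c' < zz := by
          refine ⟨a₂, ⟨a₂, ⟨le_of_lt haa, le_refl _⟩, by simp⟩, ?_⟩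
          rw [he]; exact haa
        have hL1 : ∃ zz ∈ X 1, zz < c' := by
          have h0 : ¬ (∃ zz ∈ X 1, c' < zz) := fun hh => hnp 0 (Or.inr ⟨hR0, hh⟩)
          exact (hLR 1).resolve_right h0
        obtain ⟨zz, hzz, hzzc⟩ := hL1
        refine ⟨lt_of_le_of_lt (hXI 1 hzz).1 hzzc, ?_⟩
        rw [he]; exact lt_trans haa hv1
    have hdense : ∀ w ∈ Icc u v, w ∈ closure (⋃ n, X n) := by
      intro w hw
      rw [mem_closure_iff]
      intro Oo hOo hwO
      obtain ⟨n, x, hx, hgx⟩ := ptTrans ht (isOpen_Ioo (a := a₁) (b := a₂)) hOo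
        ⟨(a₁+a₂)/2, Set.mem_Ioo.mpr ⟨by linarith, by linarith⟩,
          hAI (Set.mem_Icc.mpr ⟨by linarith, by linarith⟩)⟩ ⟨w, hwO, hw⟩
      exact ⟨g^[n] x, hgx,
        Set.mem_iUnion.mpr ⟨n, ⟨x, ⟨le_of_lt hx.1.1, le_of_lt hx.1.2⟩, rfl⟩⟩⟩
    refine ⟨c', swapFromSides hc hm ht hc'uv hcfix (flag := fun n => ∃ zz ∈ X n, zz < c')
      (k := 2) (by omega) hXI hXord (fun n => (imgSucc n).symm.subset) (fun j => ⟨c', fun tt => hc'X _⟩)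
      hflag hflagper hdense⟩

/-- find a compact subinterval of an open set meeting [u,v], inside (u,v) -/
lemma seedInOpen (huv : u < v) {U : Set ℝ} (hU : IsOpen U) (hUI : (U ∩ Icc u v).Nonempty) :
    ∃ s t : ℝ, u < s ∧ s < t ∧ t < v ∧ Icc s t ⊆ U := by
  obtain ⟨x, hxU, hxI⟩ := hUI
  obtain ⟨ε, hε, hball⟩ := Metric.isOpen_iff.mp hU x hxU
  have hsub : Ioo (x - ε) (x + ε) ⊆ U := by
    intro y hy
    apply hball
    rw [Real.ball_eq_Ioo]
    exact hy
  set lo := max u (x - ε) with hlo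
  set hi := min v (x + ε) with hhi
  have h1 : lo < hi := by
    rw [hlo, hhi]
    apply max_lt <;> [apply lt_min; apply lt_min]
    · exact huv
    · exact lt_of_le_of_lt hxI.1 (by linarith)
    · exact lt_of_lt_of_le (by linarith) hxI.2
    · linarith
  refine ⟨lo + (hi-lo)/3, hi - (hi-lo)/3, ?_, by linarith, ?_, ?_⟩
  · have : u ≤ lo := le_max_left _ _
    linarith
  · have : hi ≤ v := min_le_left _ _
    linarith
  · intro w hw
    apply hsub
    have h2 : x - ε ≤ lo := le_max_right _ _
    have h3 : hi ≤ x + ε := min_le_right _ _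
    constructor
    · have := hw.1; linarith
    · have := hw.2; linarith

lemma ptInOpen (huv : u < v) {V : Set ℝ} (hV : IsOpen V) (hVI : (V ∩ Icc u v).Nonempty) :
    ∃ w, w ∈ V ∧ w ∈ Ioo u v := by
  obtain ⟨s, t, h1, h2, h3, h4⟩ := seedInOpen huv hV hVI
  exact ⟨s, h4 ⟨le_refl _, le_of_lt h2⟩, h1, lt_trans h2 h3⟩

theorem mainDichotomy (huv : u < v) (hc : ContinuousOn g (Icc u v))
    (hm : MapsTo g (Icc u v) (Icc u v)) (ht : TransitiveOnS g (Icc u v)) :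
    MixingOnS g (Icc u v) ∨ ∃ c, SwapAt g u v c := by
  by_cases hS : ∃ c, SwapAt g u v c
  · exact Or.inr hS
  · left
    intro U V hU hV hUI hVI
    obtain ⟨s, t, hus, hst, htv, hIccU⟩ := seedInOpen huv hU hUI
    obtain ⟨v₀, hv₀V, hv₀Ioo⟩ := ptInOpen huv hV hVI
    have hseedI : Icc s t ⊆ Icc u v := fun x hx =>
      ⟨le_trans (le_of_lt hus) hx.1, le_trans hx.2 (le_of_lt htv)⟩
    by_cases hcap : ∃ m₀ : ℕ, ∃ c', g c' = c' ∧ c' ∈ g^[m₀] '' Icc s t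
    · obtain ⟨m₀, c', hcfix, hc'⟩ := hcap
      rcases captureCase hc hm ht hus hst htv hcfix hc' with hcov | hSw
      · obtain ⟨N, hN⟩ := hcov v₀ hv₀Ioo
        refine ⟨N, fun n hn => ?_⟩
        have h1 := hN n hn
        have h2 : g^[n] '' Icc s t ⊆ g^[n] '' (U ∩ Icc u v) :=
          Set.image_mono (fun w hw => ⟨hIccU hw, hseedI hw⟩)
        exact ⟨v₀, h2 h1, hv₀V⟩
      · exact absurd hSw hS
    · have hnc : ∀ n : ℕ, ∀ y ∈ g^[n] '' Icc s t, g y ≠ y := by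
        intro n y hy hgy
        exact hcap ⟨n, y, hgy, hy⟩
      exact absurd (noCaptureSwap hc hm ht hus hst htv hnc) hS

lemma swapExact (huv : u < v) (hc : ContinuousOn g (Icc u v))
    (hm : MapsTo g (Icc u v) (Icc u v)) (ht : TransitiveOnS g (Icc u v))
    {c : ℝ} (hS : SwapAt g u v c) :
    g c = c ∧ g '' Icc u c = Icc c v ∧ g '' Icc c v = Icc u c := by
  obtain ⟨hcIoo, h1, h2⟩ := hS
  have hcI : c ∈ Icc u v := ⟨le_of_lt hcIoo.1, le_of_lt hcIoo.2⟩
  have hfix : g c = c := by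
    have ha := h1 ⟨c, ⟨le_of_lt hcIoo.1, le_refl c⟩, rfl⟩
    have hb := h2 ⟨c, ⟨le_refl c, le_of_lt hcIoo.2⟩, rfl⟩
    exact le_antisymm hb.2 ha.1
  refine ⟨hfix, ?_, ?_⟩
  · refine Set.Subset.antisymm h1 ?_
    intro y hy
    rcases eq_or_lt_of_le hy.1 with heq | hyc
    · exact ⟨c, ⟨le_of_lt hcIoo.1, le_refl c⟩, heq ▸ hfix⟩
    · have hyI : y ∈ Icc u v := ⟨le_trans hcI.1 hy.1, hy.2⟩
      obtain ⟨x, hxI, hxy⟩ := surj huv hc hm ht hyI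
      rcases le_total x c with hxc | hxc
      · exact ⟨x, ⟨hxI.1, hxc⟩, hxy⟩
      · exfalso
        have h3 := h2 ⟨x, ⟨hxc, hxI.2⟩, hxy⟩
        exact absurd hyc (not_lt.2 h3.2)
  · refine Set.Subset.antisymm h2 ?_
    intro y hy
    rcases eq_or_lt_of_le hy.2 with heq | hyc
    · exact ⟨c, ⟨le_refl c, le_of_lt hcIoo.2⟩, heq.symm ▸ hfix⟩
    · have hyI : y ∈ Icc u v := ⟨hy.1, le_trans hy.2 hcI.2⟩
      obtain ⟨x, hxI, hxy⟩ := surj huv hc hm ht hyI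
      rcases le_total x c with hxc | hxc
      · exfalso
        have h3 := h1 ⟨x, ⟨hxI.1, hxc⟩, hxy⟩
        exact absurd hyc (not_lt.2 h3.1)
      · exact ⟨x, ⟨hxc, hxI.2⟩, hxy⟩

lemma iterComp (n : ℕ) : (g ∘ g)^[n] = g^[2*n] := by
  rw [Function.iterate_mul]
  congr 1

lemma halvesTransLeft (hc : ContinuousOn g (Icc u v))
    (hm : MapsTo g (Icc u v) (Icc u v)) (ht : TransitiveOnS g (Icc u v))
    {c : ℝ} (hS : SwapAt g u v c) : TransitiveOnS (g ∘ g) (Icc u c) := by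
  obtain ⟨hcIoo, h1, h2⟩ := hS
  have hpar : ∀ x ∈ Icc u c, ∀ n : ℕ, g^[2*n] x ∈ Icc u c ∧ g^[2*n+1] x ∈ Icc c v := by
    intro x hx n
    induction n with
    | zero =>
      refine ⟨by simpa using hx, ?_⟩
      simp only [Nat.mul_zero, Nat.zero_add, Function.iterate_one]
      exact h1 ⟨x, hx, rfl⟩
    | succ m ih =>
      have hstep : g^[2*(m+1)] x ∈ Icc u c := by
        rw [show 2*(m+1) = (2*m+1)+1 by ring, Function.iterate_succ', Function.comp_apply]
        exact h2 ⟨g^[2*m+1] x, ih.2, rfl⟩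
      refine ⟨hstep, ?_⟩
      rw [show 2*(m+1)+1 = (2*(m+1))+1 from rfl, Function.iterate_succ', Function.comp_apply]
      exact h1 ⟨g^[2*(m+1)] x, hstep, rfl⟩
  have hextract : ∀ W : Set ℝ, IsOpen W → (W ∩ Icc u c).Nonempty →
      ((W ∩ Iio c) ∩ Icc u v).Nonempty := by
    intro W hW hWI
    obtain ⟨y, hyW, hyI⟩ := hWI
    rcases lt_or_eq_of_le hyI.2 with hyc | hyc
    · exact ⟨y, ⟨hyW, hyc⟩, hyI.1, le_trans (le_of_lt hyc) (le_of_lt hcIoo.2)⟩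
    · subst hyc
      obtain ⟨ε, hε, hball⟩ := Metric.isOpen_iff.mp hW y hyW
      refine ⟨max u (y - ε/2), ⟨?_, ?_⟩, le_max_left _ _, ?_⟩
      · apply hball
        rw [Real.ball_eq_Ioo]
        constructor
        · have h3 : y - ε/2 ≤ max u (y - ε/2) := le_max_right _ _
          linarith
        · have h3 : max u (y - ε/2) < y := max_lt hcIoo.1 (by linarith)
          linarith
      · exact max_lt hcIoo.1 (by linarith)
      · have h3 : max u (y - ε/2) < y := max_lt hcIoo.1 (by linarith)
        exact le_trans (le_of_lt h3) (le_of_lt hcIoo.2)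
  intro U V hU hV hUI hVI
  obtain ⟨m, x, hx, hgx⟩ := ptTrans ht (hU.inter isOpen_Iio) (hV.inter isOpen_Iio)
    (hextract U hU hUI) (hextract V hV hVI)
  have hxuc : x ∈ Icc u c := ⟨hx.2.1, le_of_lt hx.1.2⟩
  have hmeven : ∃ n, m = 2*n := by
    rcases Nat.even_or_odd m with he | ho
    · obtain ⟨j, hj⟩ := he
      exact ⟨j, by omega⟩
    · exfalso
      obtain ⟨j, hj⟩ := ho
      have h3 := (hpar x hxuc j).2
      rw [← hj] at h3
      exact absurd hgx.2 (not_lt.2 h3.1)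
  obtain ⟨n, hn⟩ := hmeven
  refine ⟨n, (g ∘ g)^[n] x, ⟨x, ⟨hx.1.1, hxuc⟩, rfl⟩, ?_⟩
  rw [iterComp, ← hn]
  exact hgx.1

lemma halvesTransRight (hc : ContinuousOn g (Icc u v))
    (hm : MapsTo g (Icc u v) (Icc u v)) (ht : TransitiveOnS g (Icc u v))
    {c : ℝ} (hS : SwapAt g u v c) : TransitiveOnS (g ∘ g) (Icc c v) := by
  obtain ⟨hcIoo, h1, h2⟩ := hS
  have hpar : ∀ x ∈ Icc c v, ∀ n : ℕ, g^[2*n] x ∈ Icc c v ∧ g^[2*n+1] x ∈ Icc u c := by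
    intro x hx n
    induction n with
    | zero =>
      refine ⟨by simpa using hx, ?_⟩
      simp only [Nat.mul_zero, Nat.zero_add, Function.iterate_one]
      exact h2 ⟨x, hx, rfl⟩
    | succ m ih =>
      have hstep : g^[2*(m+1)] x ∈ Icc c v := by
        rw [show 2*(m+1) = (2*m+1)+1 by ring, Function.iterate_succ', Function.comp_apply]
        exact h1 ⟨g^[2*m+1] x, ih.2, rfl⟩
      refine ⟨hstep, ?_⟩
      rw [show 2*(m+1)+1 = (2*(m+1))+1 from rfl, Function.iterate_succ', Function.comp_apply]
      exact h2 ⟨g^[2*(m+1)] x, hstep, rfl⟩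
  have hextract : ∀ W : Set ℝ, IsOpen W → (W ∩ Icc c v).Nonempty →
      ((W ∩ Ioi c) ∩ Icc u v).Nonempty := by
    intro W hW hWI
    obtain ⟨y, hyW, hyI⟩ := hWI
    rcases lt_or_eq_of_le hyI.1 with hyc | hyc
    · exact ⟨y, ⟨hyW, hyc⟩, le_trans (le_of_lt hcIoo.1) (le_of_lt hyc), hyI.2⟩
    · subst hyc  -- note: hyc : c = y ; substitutes c
      obtain ⟨ε, hε, hball⟩ := Metric.isOpen_iff.mp hW _ hyW
      refine ⟨min v (c + ε/2), ⟨?_, ?_⟩, ?_, min_le_left _ _⟩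
      · apply hball
        rw [Real.ball_eq_Ioo]
        constructor
        · have h3 : c < min v (c + ε/2) := lt_min hcIoo.2 (by linarith)
          linarith
        · have h3 : min v (c + ε/2) ≤ c + ε/2 := min_le_right _ _
          linarith
      · exact lt_min hcIoo.2 (by linarith)
      · have h3 : c < min v (c + ε/2) := lt_min hcIoo.2 (by linarith)
        exact le_trans (le_of_lt hcIoo.1) (le_of_lt h3)
  intro U V hU hV hUI hVI
  obtain ⟨m, x, hx, hgx⟩ := ptTrans ht (hU.inter isOpen_Ioi) (hV.inter isOpen_Ioi)
    (hextract U hU hUI) (hextract V hV hVI)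
  have hxcv : x ∈ Icc c v := ⟨le_of_lt hx.1.2, hx.2.2⟩
  have hmeven : ∃ n, m = 2*n := by
    rcases Nat.even_or_odd m with he | ho
    · obtain ⟨j, hj⟩ := he
      exact ⟨j, by omega⟩
    · exfalso
      obtain ⟨j, hj⟩ := ho
      have h3 := (hpar x hxcv j).2
      rw [← hj] at h3
      exact absurd hgx.2 (not_lt.2 h3.2)
  obtain ⟨n, hn⟩ := hmeven
  refine ⟨n, (g ∘ g)^[n] x, ⟨x, ⟨hx.1.1, hxcv⟩, rfl⟩, ?_⟩
  rw [iterComp, ← hn]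
  exact hgx.1

lemma halfMixLeft (huv : u < v) (hc : ContinuousOn g (Icc u v))
    (hm : MapsTo g (Icc u v) (Icc u v)) (ht : TransitiveOnS g (Icc u v))
    {c : ℝ} (hS : SwapAt g u v c) : MixingOnS (g ∘ g) (Icc u c) := by
  obtain ⟨hfix, h1e, h2e⟩ := swapExact huv hc hm ht hS
  obtain ⟨hcIoo, h1, h2⟩ := hS
  have hmaps2 : MapsTo (g ∘ g) (Icc u c) (Icc u c) := by
    intro x hx
    exact h2 ⟨g x, h1 ⟨x, hx, rfl⟩, rfl⟩
  have hsub : Icc u c ⊆ Icc u v := fun x hx => ⟨hx.1, le_trans hx.2 (le_of_lt hcIoo.2)⟩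
  have hcont2 : ContinuousOn (g ∘ g) (Icc u c) :=
    hc.comp (hc.mono hsub) (fun x hx => hm (hsub hx))
  have ht2 := halvesTransLeft hc hm ht ⟨hcIoo, h1, h2⟩
  rcases mainDichotomy hcIoo.1 hcont2 hmaps2 ht2 with hmix | ⟨c'', hsw⟩
  · exact hmix
  · exfalso
    obtain ⟨hc''Ioo, hs1, hs2⟩ := hsw
    have h3 : (g ∘ g) c ∈ Icc u c'' := hs2 ⟨c, ⟨le_of_lt hc''Ioo.2, le_refl c⟩, rfl⟩
    have h4 : (g ∘ g) c = c := by simp only [Function.comp_apply, hfix]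
    rw [h4] at h3
    exact absurd h3.2 (not_le.2 hc''Ioo.2)

lemma halfMixRight (huv : u < v) (hc : ContinuousOn g (Icc u v))
    (hm : MapsTo g (Icc u v) (Icc u v)) (ht : TransitiveOnS g (Icc u v))
    {c : ℝ} (hS : SwapAt g u v c) : MixingOnS (g ∘ g) (Icc c v) := by
  obtain ⟨hfix, h1e, h2e⟩ := swapExact huv hc hm ht hS
  obtain ⟨hcIoo, h1, h2⟩ := hS
  have hmaps2 : MapsTo (g ∘ g) (Icc c v) (Icc c v) := by
    intro x hx
    exact h1 ⟨g x, h2 ⟨x, hx, rfl⟩, rfl⟩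
  have hsub : Icc c v ⊆ Icc u v := fun x hx => ⟨le_trans (le_of_lt hcIoo.1) hx.1, hx.2⟩
  have hcont2 : ContinuousOn (g ∘ g) (Icc c v) :=
    hc.comp (hc.mono hsub) (fun x hx => hm (hsub hx))
  have ht2 := halvesTransRight hc hm ht ⟨hcIoo, h1, h2⟩
  rcases mainDichotomy hcIoo.2 hcont2 hmaps2 ht2 with hmix | ⟨c'', hsw⟩
  · exact hmix
  · exfalso
    obtain ⟨hc''Ioo, hs1, hs2⟩ := hsw
    have h3 : (g ∘ g) c ∈ Icc c'' v := hs1 ⟨c, ⟨le_refl c, le_of_lt hc''Ioo.1⟩, rfl⟩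
    have h4 : (g ∘ g) c = c := by simp only [Function.comp_apply, hfix]
    rw [h4] at h3
    exact absurd h3.1 (not_le.2 hc''Ioo.1)

end IntDyn

open IntDyn in
theorem stmt_8 (f : ℝ → ℝ) (hf : ContinuousOn f (Icc 0 1))
    (hmaps : MapsTo f (Icc 0 1) (Icc 0 1)) (htrans : TransitiveOnS f (Icc 0 1)) :
    (MixingOnS f (Icc 0 1) ∨
      ∃ a ∈ Ioo (0:ℝ) 1, f a = a ∧ f '' Icc 0 a = Icc a 1 ∧ f '' Icc a 1 = Icc 0 a ∧
        MixingOnS (f ∘ f) (Icc 0 a) ∧ MixingOnS (f ∘ f) (Icc a 1)) ∧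
    Icc (0:ℝ) 1 ⊆ closure {x ∈ Icc (0:ℝ) 1 | ∃ n : ℕ, 0 < n ∧ f^[n] x = x} := by
  have h01 : (0:ℝ) < 1 := one_pos
  constructor
  · rcases mainDichotomy h01 hf hmaps htrans with hmix | ⟨c, hSw⟩
    · exact Or.inl hmix
    · right
      obtain ⟨hfix, he1, he2⟩ := swapExact h01 hf hmaps htrans hSw
      exact ⟨c, hSw.1, hfix, he1, he2,
        halfMixLeft h01 hf hmaps htrans hSw, halfMixRight h01 hf hmaps htrans hSw⟩
  · intro x hx
    rw [mem_closure_iff]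
    intro O hO hxO
    obtain ⟨ε, hε, hball⟩ := Metric.isOpen_iff.mp hO x hxO
    set lo := max 0 (x - ε/2) with hlo
    set hi := min 1 (x + ε/2) with hhi
    have h1 : lo < hi := by
      rw [hlo, hhi]
      apply max_lt <;> [apply lt_min; apply lt_min]
      · exact h01
      · exact lt_of_le_of_lt hx.1 (by linarith)
      · exact lt_of_lt_of_le (by linarith) hx.2
      · linarith
    obtain ⟨z, hz, n, hn, hzper⟩ := perdense hf hmaps htrans
      (le_max_left 0 (x - ε/2)) (min_le_left 1 (x + ε/2)) h1
    refine ⟨z, ?_, ?_⟩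
    · apply hball
      rw [Real.ball_eq_Ioo]
      constructor
      · have h2 : x - ε/2 ≤ lo := le_max_right _ _
        have h3 := hz.1
        linarith
      · have h2 : hi ≤ x + ε/2 := min_le_right _ _
        have h3 := hz.2
        linarith
    · refine ⟨⟨?_, ?_⟩, n, hn, hzper⟩
      · exact le_trans (le_max_left _ _) (le_of_lt hz.1)
      · exact le_trans (le_of_lt hz.2) (min_le_left _ _)
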